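/- Divisibility of the renormalized theta value: for every admissible triple (a,b,c) of half-integers, the Laurent polynomial [a+b+c+1] · [a+b+c; a+b−c, b+c−a, c+a−b] is divisible by [2a+1] in ℤ[q, q^{−1}] (and likewise by [2b+1] and by [2c+1]). -/

import Mathlib

noncomputable section
open scoped Classical

namespace QSpin

/-- The ambient field: rational functions over `ℂ` (which contains `ℚ(i)`),
in a variable `X` which represents the formal fourth root `q^(1/4)`. -/
abbrev K : Type := RatFunc ℂ

/-- `X` represents `q^(1/4)`. -/
def X : K := RatFunc.X

/-- The quantum variable `q = X^4`. -/
def q : K := X ^ 4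

/-- `i = √-1`, as a constant of `K`. -/
def ii : K := RatFunc.C Complex.I

/-- `q` raised to a rational power `r` (meaningful whenever `4 * r ∈ ℤ`). -/
def qpow (r : ℚ) : K := X ^ (4 * r).num

/-- Half of an integer, as a rational number: a half-integer is encoded by its double. -/
def hf (n : ℤ) : ℚ := (n : ℚ) / 2

/-- Integer powers of `i`. -/
def ipow (n : ℤ) : K := ii ^ n

/-- Integer powers of `-1`. -/
def m1pow (n : ℤ) : K := (-1 : K) ^ n

/-- The quantum integer `[n] = (q^n - q^(-n))/(q - q⁻¹)`. -/
def qint (n : ℤ) : K := (q ^ n - q ^ (-n)) / (q - q⁻¹)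

/-- The quantum factorial `[n]!`. -/
def qfact (n : ℕ) : K := ∏ j ∈ Finset.range n, qint (j + 1)

/-- The quantum factorial of an integer (zero for negative arguments). -/
def qfactz (n : ℤ) : K := if 0 ≤ n then qfact n.toNat else 0

/-- The quantum binomial `[n choose k]`, vanishing unless `0 ≤ k ≤ n`. -/
def qbin (n k : ℤ) : K :=
  if 0 ≤ k ∧ k ≤ n then qfactz n / (qfactz k * qfactz (n - k)) else 0

/-- Admissibility of a triple of half-integers (encoded by their doubles):
all nonnegative, total sum an integer (i.e. the sum of the doubles is even), and
the triangular inequalities hold. -/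
def Adm (a b c : ℤ) : Prop :=
  0 ≤ a ∧ 0 ≤ b ∧ 0 ≤ c ∧ 2 ∣ (a + b + c) ∧ c ≤ a + b ∧ a ≤ b + c ∧ b ≤ c + a

/-- The quantum Clebsch-Gordan coefficient `C^{a,b,c}_{u,v,t}`; all six half-integer
parameters are encoded by their doubles. -/
def CG (a b c u v t : ℤ) : K :=
  if u + v = t then
    ipow ((c - a - b) / 2) * m1pow ((b - v) / 2 - (c - t) / 2) *
      qpow ((hf b - hf v) * (hf b + hf v + 1) / 2 - (hf a - hf u) * (hf a + hf u + 1) / 2) *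
      (qfactz ((a + b - c) / 2) * qfactz ((b + c - a) / 2) * qfactz ((c + a - b) / 2) /
        qfactz c) *
      ∑ z ∈ Finset.range (((c - t) / 2).toNat + 1),
        m1pow z *
          qpow (((z : ℚ) - (((c - t) / 2 - (z : ℤ) : ℤ) : ℚ)) * (hf c + hf t + 1) / 2) *
          qbin ((a + u) / 2 + z) ((a + c - b) / 2) *
          qbin ((b + v) / 2 + ((c - t) / 2 - (z : ℤ))) ((b + c - a) / 2) *
          qbin ((c - t) / 2) z
  else 0

/-- The coefficient `W^{a,b,c}_{u,v,t} = C^{a,b,c}_{u,v,-t} · i^{-2t} q^{-t} · [2c]!`. -/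
def W (a b c u v t : ℤ) : K := CG a b c u v (-t) * ipow (-t) * qpow (-(hf t)) * qfactz c

/-- The coefficient `P^{a,b,c}_{u,v,t} = C^{a,c,b}_{-u,t,v} · i^{2u} q^{u} / [2a]!`. -/
def Pc (a b c u v t : ℤ) : K := CG a c b (-u) t v * ipow u * qpow (hf u) / qfactz a

/-- The coefficient `M^{a,b,c}_{u,v,t} = P^{a,b,c}_{u,v,-t} · i^{-2t} q^{-t} / [2c]!`. -/
def M (a b c u v t : ℤ) : K := Pc a b c u v (-t) * ipow (-t) * qpow (-(hf t)) / qfactz c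


/-- The renormalized unknot value `O(a) = (−1)^{2a}[2a+1]`
(the half-integer `a` is encoded by its double). -/
def O (a : ℤ) : K := m1pow a * qint (a + 1)

/-- The renormalized theta value
`Θ(a,b,c) = (−1)^{a+b+c}[a+b+c+1]·[a+b+c; a+b−c, b+c−a, c+a−b]`
(half-integers encoded by their doubles). -/
def Th (a b c : ℤ) : K :=
  m1pow ((a + b + c) / 2) * qint ((a + b + c) / 2 + 1) *
    (qfactz ((a + b + c) / 2) /
      (qfactz ((a + b - c) / 2) * qfactz ((b + c - a) / 2) * qfactz ((c + a - b) / 2)))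

/-- The renormalized 6j-symbol (tetrahedron)
`Tet(a,b,c,d,e,f) = Σ_{z=max Tᵢ}^{min Qⱼ} (−1)^z [z+1] ·
[z; z−T₁, z−T₂, z−T₃, z−T₄, Q₁−z, Q₂−z, Q₃−z]`
(half-integers encoded by their doubles). -/
def Tet (a b c d e f : ℤ) : K :=
  (let T1 := (a + b + c) / 2; let T2 := (a + e + f) / 2;
   let T3 := (d + b + f) / 2; let T4 := (d + e + c) / 2;
   let Q1 := (a + b + d + e) / 2; let Q2 := (a + c + d + f) / 2;
   let Q3 := (b + c + e + f) / 2;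
   ∑ z ∈ Finset.Icc (max (max T1 T2) (max T3 T4)) (min (min Q1 Q2) Q3),
     m1pow z * qint (z + 1) *
       (qfactz z /
         (qfactz (z - T1) * qfactz (z - T2) * qfactz (z - T3) * qfactz (z - T4) *
           qfactz (Q1 - z) * qfactz (Q2 - z) * qfactz (Q3 - z))))

/-- The renormalized theta value without its sign,
`[a+b+c+1] · [a+b+c; a+b−c, b+c−a, c+a−b]` (half-integers encoded by doubles). -/
def thetaMultinomial (a b c : ℤ) : K :=
  qint ((a + b + c) / 2 + 1) *
    (qfactz ((a + b + c) / 2) /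
      (qfactz ((a + b - c) / 2) * qfactz ((b + c - a) / 2) * qfactz ((c + a - b) / 2)))


lemma X_ne_zero : (X : K) ≠ 0 := RatFunc.X_ne_zero

lemma X_pow_ne_one (n : ℕ) (hn : 0 < n) : (X : K) ^ n ≠ 1 := by
  intro h
  have h2 : algebraMap (Polynomial ℂ) K (Polynomial.X ^ n) = algebraMap (Polynomial ℂ) K 1 := by
    simpa [X, RatFunc.algebraMap_X, map_pow] using h
  have h3 : (Polynomial.X ^ n : Polynomial ℂ) = 1 := RatFunc.algebraMap_injective ℂ h2
  have := congrArg (Polynomial.eval 0) h3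
  simp [hn.ne'] at this

lemma q_ne_zero : (q : K) ≠ 0 := pow_ne_zero _ X_ne_zero

lemma qz (n : ℤ) : q ^ n = X ^ (4 * n) := by
  rw [q, ← zpow_natCast X 4, ← zpow_mul]; norm_num

lemma qpow_sub_ne_zero (n : ℤ) (hn : 0 < n) : q ^ n - q ^ (-n) ≠ 0 := by
  have h8 : (0:ℤ) < 8 * n := by omega
  have key : (X:K) ^ (8 * n) ≠ 1 := by
    have := X_pow_ne_one (8 * n).toNat (by omega)
    rwa [← zpow_natCast, Int.toNat_of_nonneg h8.le] at this
  intro h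
  apply key
  have hx : (X:K) ≠ 0 := X_ne_zero
  have h2 : (X:K) ^ (4 * n) = X ^ (-(4 * n)) := by
    have := sub_eq_zero.mp h
    rw [qz, qz] at this
    rw [this]; congr 1; ring
  have h3 := congrArg (· * X ^ (4 * n)) h2
  simp only [← zpow_add₀ hx] at h3
  rw [(by ring : -(4*n) + 4*n = (0:ℤ)), (by ring : 4*n + 4*n = 8*n)] at h3
  simpa using h3

lemma d_ne_zero : q - q⁻¹ ≠ 0 := by
  have := qpow_sub_ne_zero 1 one_pos
  simpa [zpow_one, zpow_neg] using this

lemma qint_ne_zero (n : ℤ) (hn : 0 < n) : qint n ≠ 0 :=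
  div_ne_zero (qpow_sub_ne_zero n hn) d_ne_zero

lemma qfact_ne_zero (n : ℕ) : qfact n ≠ 0 := by
  rw [qfact]
  exact Finset.prod_ne_zero_iff.2 fun j _ => qint_ne_zero _ (by positivity)

lemma qint_add' (m n : ℕ) : qint (m + n) = q ^ (m:ℤ) * qint n + q ^ (-(n:ℤ)) * qint m := by
  rw [qint, qint, qint, ← mul_div_assoc, ← mul_div_assoc, ← add_div]
  congr 1
  have hq : (q:K) ≠ 0 := q_ne_zero
  rw [neg_add, zpow_add₀ hq, zpow_add₀ hq]
  ring

lemma qfact_succ (n : ℕ) : qfact (n + 1) = qint (n + 1) * qfact n := by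
  rw [qfact, Finset.prod_range_succ, mul_comm, qfact]

def S : Subring K := Subring.closure ({q, q⁻¹} : Set K)

lemma q_mem : q ∈ S := Subring.subset_closure (by simp)
lemma qinv_mem : q⁻¹ ∈ S := Subring.subset_closure (by simp)

lemma qzpow_mem (n : ℤ) : q ^ n ∈ S := by
  rcases le_or_gt 0 n with h | h
  · lift n to ℕ using h; rw [zpow_natCast]; exact pow_mem q_mem _
  · have : q ^ n = (q⁻¹) ^ (-n).toNat := by
      rw [inv_pow, ← zpow_natCast, ← zpow_neg]
      congr 1; omega
    rw [this]; exact pow_mem qinv_mem _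

lemma qint_one : qint 1 = 1 := by
  rw [qint]
  simp only [zpow_one, zpow_neg]
  exact div_self d_ne_zero

lemma qint_nat_mem (n : ℕ) : qint n ∈ S := by
  induction n with
  | zero => simpa [qint] using zero_mem S
  | succ n ih =>
      have h := qint_add' 1 n
      push_cast at h ⊢
      rw [show (1:ℤ) + (n:ℤ) = (n:ℤ)+1 from by ring] at h
      rw [h, qint_one]
      exact add_mem (mul_mem (by simpa using qzpow_mem 1) ih)
        (mul_mem (by simpa using qzpow_mem (-(n:ℤ))) (one_mem _))

def B (k l : ℕ) : K := qfact (k + l) / (qfact k * qfact l)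

lemma qfact_zero : qfact 0 = 1 := by simp [qfact]

lemma B_zero_left (l : ℕ) : B 0 l = 1 := by
  rw [B, qfact_zero, zero_add, one_mul, div_self (qfact_ne_zero l)]

lemma B_zero_right (k : ℕ) : B k 0 = 1 := by
  rw [B, qfact_zero, add_zero, mul_one, div_self (qfact_ne_zero k)]

lemma B_pascal (k l : ℕ) :
    B (k+1) (l+1) = q ^ ((k:ℤ)+1) * B (k+1) l + q ^ (-((l:ℤ)+1)) * B k (l+1) := by
  rw [B, B, B]
  have hadd : qint (((k+1+(l+1):ℕ)):ℤ) =
      q ^ ((k:ℤ)+1) * qint ((l:ℤ)+1) + q ^ (-((l:ℤ)+1)) * qint ((k:ℤ)+1) := by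
    have h := qint_add' (k+1) (l+1)
    push_cast at h ⊢
    convert h using 2 <;> push_cast <;> ring
  rw [show k+1+(l+1) = (k+l+1)+1 from by ring] at hadd ⊢
  rw [qfact_succ (k+l+1), show k+1+l = k+l+1 from by ring,
      show k+(l+1) = k+l+1 from by ring, qfact_succ k, qfact_succ l]
  rw [show (((k+l+1)+1 : ℕ) : ℤ) = (((k+l+1:ℕ)+1 :ℕ) :ℤ) from by push_cast; ring] at hadd
  push_cast at hadd
  push_cast
  rw [hadd]
  have h1 := qfact_ne_zero k
  have h2 := qfact_ne_zero l
  have h3 := qint_ne_zero ((k:ℤ)+1) (by positivity)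
  have h4 := qint_ne_zero ((l:ℤ)+1) (by positivity)
  field_simp

lemma B_mem (k l : ℕ) : B k l ∈ S := by
  induction k generalizing l with
  | zero => rw [B_zero_left]; exact one_mem _
  | succ k ihk =>
      induction l with
      | zero => rw [B_zero_right]; exact one_mem _
      | succ l ihl =>
          rw [B_pascal]
          exact add_mem (mul_mem (qzpow_mem _) ihl) (mul_mem (qzpow_mem _) (ihk _))

lemma key (x y z : ℕ) :
    qint ((x:ℤ)+y+z+1) * (qfact (x+y+z) / (qfact x * qfact y * qfact z)) =
      qint ((x:ℤ)+z+1) * (B y (x+z+1) * B x z) := by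
  rw [B, B, show y+(x+z+1) = (x+y+z)+1 from by omega, qfact_succ (x+y+z), qfact_succ (x+z)]
  have h0 := qfact_ne_zero x; have h1 := qfact_ne_zero y; have h2 := qfact_ne_zero z
  have h3 := qfact_ne_zero (x+y+z); have h4 := qfact_ne_zero (x+z)
  have h5 : qint ((x:ℤ)+z+1) ≠ 0 := qint_ne_zero _ (by positivity)
  have h6 : qint ((x:ℤ)+y+z+1) ≠ 0 := qint_ne_zero _ (by positivity)
  push_cast
  field_simp

lemma qfactz_natCast (n : ℕ) : qfactz (n:ℤ) = qfact n := by
  rw [qfactz, if_pos (Int.natCast_nonneg n)]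
  simp

/-- Divisibility of the renormalized theta value: for every
admissible triple `(a,b,c)` of half-integers (encoded by doubles), the Laurent
polynomial `[a+b+c+1] · [a+b+c; a+b−c, b+c−a, c+a−b]` is divisible by `[2a+1]`
in `ℤ[q, q⁻¹]`, and likewise by `[2b+1]` and by `[2c+1]`. -/
theorem theta_divisibility (a b c : ℤ) (h : Adm a b c) :
    (∃ P ∈ Subring.closure ({q, q⁻¹} : Set K),
        thetaMultinomial a b c = qint (a + 1) * P)
    ∧ (∃ P ∈ Subring.closure ({q, q⁻¹} : Set K),
        thetaMultinomial a b c = qint (b + 1) * P)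
    ∧ (∃ P ∈ Subring.closure ({q, q⁻¹} : Set K),
        thetaMultinomial a b c = qint (c + 1) * P) := by
  obtain ⟨ha, hb, hc, hd, h1, h2, h3⟩ := h
  set x := ((a+b-c)/2).toNat with hxdef
  set y := ((b+c-a)/2).toNat with hydef
  set z := ((c+a-b)/2).toNat with hzdef
  have e1 : (a+b+c)/2 = (x:ℤ)+y+z := by omega
  have e2 : (a+b-c)/2 = (x:ℤ) := by omega
  have e3 : (b+c-a)/2 = (y:ℤ) := by omega
  have e4 : (c+a-b)/2 = (z:ℤ) := by omega
  have hT : thetaMultinomial a b c =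
      qint ((x:ℤ)+y+z+1) * (qfact (x+y+z) / (qfact x * qfact y * qfact z)) := by
    rw [thetaMultinomial, e1, e2, e3, e4]
    rw [show (x:ℤ)+y+z = ((x+y+z:ℕ):ℤ) from by push_cast; ring,
        qfactz_natCast, qfactz_natCast, qfactz_natCast, qfactz_natCast]
  refine ⟨⟨B y (x+z+1) * B x z, mul_mem (B_mem _ _) (B_mem _ _), ?_⟩,
          ⟨B z (x+y+1) * B x y, mul_mem (B_mem _ _) (B_mem _ _), ?_⟩,
          ⟨B x (y+z+1) * B y z, mul_mem (B_mem _ _) (B_mem _ _), ?_⟩⟩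
  · rw [show a + 1 = (x:ℤ)+z+1 from by omega]
    exact hT.trans (key x y z)
  · have kb := key x z y
    rw [show (x:ℤ)+z+y+1 = (x:ℤ)+y+z+1 from by ring, show (x:ℤ)+y+1 = (x:ℤ)+y+1 from rfl,
        show x+z+y = x+y+z from by omega,
        show qfact x * qfact z * qfact y = qfact x * qfact y * qfact z from by ring] at kb
    rw [show b + 1 = (x:ℤ)+y+1 from by omega]
    exact hT.trans kb
  · have kc := key y x z
    rw [show (y:ℤ)+x+z+1 = (x:ℤ)+y+z+1 from by ring,
        show y+x+z = x+y+z from by omega,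
        show qfact y * qfact x * qfact z = qfact x * qfact y * qfact z from by ring] at kc
    rw [show c + 1 = (y:ℤ)+z+1 from by omega]
    exact hT.trans kc

end QSpin
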